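/- Let g be a Lie algebra with invariant element t and associator expansion Φ(ħt¹²,ħt²³) = 1 + (ħ²/6)φ + O(ħ³) with φ = (1/4)[t¹²,t²³]. Suppose m_ħ = Σ ħⁱ m_{(i)} : A ⊗ A → A[[ħ]] satisfies the Φ-twisted associativity m_ħ ∘ (1 ⊗ m_ħ) ∘ Φ_A = m_ħ ∘ (m_ħ ⊗ 1), where Φ_A is the action of Φ(ħt¹², ħt²³) on A^⊗3, and that m_0 = m_{(0)} is commutative. Define {a,b} := m_{(1)}(a⊗b − b⊗a). Then {·,·} is a skew-symmetric biderivation of (A, m_0) and satisfies {a₁,{a₂,a₃}} + cyclic permutations = −m_0⁽³⁾(φ·(a₁⊗a₂⊗a₃)), i.e., (A, m_0, {·,·}) is a g-quasi-Poisson algebra. -/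

import Mathlib

open TensorProduct

variable {k : Type*} [Field k] [CharZero k]

/-- Action of an element of `g ⊗ g` on `M ⊗ M` via the two tensor legs. -/
noncomputable def twoLegM {g M : Type*} [AddCommGroup g] [Module k g] [AddCommGroup M]
    [Module k M] (ρ : g →ₗ[k] Module.End k M) :
    g ⊗[k] g →ₗ[k] Module.End k (M ⊗[k] M) :=
  TensorProduct.lift (((TensorProduct.mapBilinear (RingHom.id k) M M M M).comp ρ).compl₂ ρ)

/-- Action of an element of `g ⊗ (g ⊗ g)` on `M ⊗ (M ⊗ M)` via the three legs. -/
noncomputable def threeLegM {g M : Type*} [AddCommGroup g] [Module k g] [AddCommGroup M]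
    [Module k M] (ρ : g →ₗ[k] Module.End k M) :
    g ⊗[k] (g ⊗[k] g) →ₗ[k] Module.End k (M ⊗[k] (M ⊗[k] M)) :=
  TensorProduct.lift
    (((TensorProduct.mapBilinear (RingHom.id k) M (M ⊗[k] M) M (M ⊗[k] M)).comp ρ).compl₂ (twoLegM ρ))

/-- The element `[t¹², t²³] ∈ g ⊗ g ⊗ g`. -/
noncomputable def tCommutator (k : Type*) {g : Type*} [Field k] [LieRing g]
    [LieAlgebra k g] (t : g ⊗[k] g) : g ⊗[k] (g ⊗[k] g) :=
  (TensorProduct.map LinearMap.id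
      (TensorProduct.map (TensorProduct.lift (LieAlgebra.ad k g)) LinearMap.id))
    ((TensorProduct.map LinearMap.id ((TensorProduct.assoc k g g g).symm.toLinearMap))
      ((TensorProduct.assoc k g g (g ⊗[k] g)).toLinearMap (t ⊗ₜ[k] t)))

/-- The Cartan trivector `φ = (1/4)[t¹², t²³]`. -/
noncomputable def cartanPhi (k : Type*) {g : Type*} [Field k] [LieRing g]
    [LieAlgebra k g] (t : g ⊗[k] g) : g ⊗[k] (g ⊗[k] g) :=
  (4 : k)⁻¹ • tCommutator k t

section AuxEE
variable (k : Type*) {V : Type*} [Field k] [AddCommGroup V] [Module k V]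

noncomputable def sigma12 : V ⊗[k] (V ⊗[k] V) →ₗ[k] V ⊗[k] (V ⊗[k] V) :=
  (TensorProduct.assoc k V V V).toLinearMap ∘ₗ
    (TensorProduct.map (TensorProduct.comm k V V).toLinearMap LinearMap.id) ∘ₗ
    (TensorProduct.assoc k V V V).symm.toLinearMap

noncomputable def sigma23 : V ⊗[k] (V ⊗[k] V) →ₗ[k] V ⊗[k] (V ⊗[k] V) :=
  TensorProduct.map LinearMap.id (TensorProduct.comm k V V).toLinearMap

@[simp] lemma sigma12_tmul (x y z : V) :
    sigma12 k (x ⊗ₜ[k] (y ⊗ₜ[k] z)) = y ⊗ₜ[k] (x ⊗ₜ[k] z) := by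
  simp [sigma12]

@[simp] lemma sigma23_tmul (x y z : V) :
    sigma23 k (x ⊗ₜ[k] (y ⊗ₜ[k] z)) = x ⊗ₜ[k] (z ⊗ₜ[k] y) := by
  simp [sigma23]

section tComm
variable {k : Type*} {g : Type*} [Field k] [LieRing g] [LieAlgebra k g]

/-- The global map whose value on `t ⊗ t` is `tCommutator`. -/
noncomputable def LCmap (k : Type*) (g : Type*) [Field k] [LieRing g] [LieAlgebra k g] :
    (g ⊗[k] g) ⊗[k] (g ⊗[k] g) →ₗ[k] g ⊗[k] (g ⊗[k] g) :=
  (TensorProduct.map LinearMap.id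
      (TensorProduct.map (TensorProduct.lift (LieAlgebra.ad k g)) LinearMap.id)) ∘ₗ
    (TensorProduct.map LinearMap.id ((TensorProduct.assoc k g g g).symm.toLinearMap)) ∘ₗ
    (TensorProduct.assoc k g g (g ⊗[k] g)).toLinearMap

lemma tCommutator_eq (t : g ⊗[k] g) : tCommutator k t = LCmap k g (t ⊗ₜ[k] t) := rfl

@[simp] lemma LCmap_tmul (x y x' y' : g) :
    LCmap k g ((x ⊗ₜ[k] y) ⊗ₜ[k] (x' ⊗ₜ[k] y')) = x ⊗ₜ[k] (⁅y, x'⁆ ⊗ₜ[k] y') := by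
  simp [LCmap, LieAlgebra.ad_apply]

/-- bracket of the second pair leg against a full `g ⊗ g`. -/
noncomputable def brMap (k : Type*) (g : Type*) [Field k] [LieRing g] [LieAlgebra k g] :
    g ⊗[k] (g ⊗[k] g) →ₗ[k] g ⊗[k] g :=
  TensorProduct.lift ((LieModule.toEnd k g (g ⊗[k] g) : g →ₗ[k] Module.End k (g ⊗[k] g)))

@[simp] lemma brMap_tmul (x : g) (s : g ⊗[k] g) : brMap k g (x ⊗ₜ[k] s) = ⁅x, s⁆ := by
  simp [brMap]

noncomputable def ThetaG (k : Type*) (g : Type*) [Field k] [LieRing g] [LieAlgebra k g] :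
    (g ⊗[k] g) ⊗[k] (g ⊗[k] g) →ₗ[k] g ⊗[k] (g ⊗[k] g) :=
  (TensorProduct.map LinearMap.id (brMap k g)) ∘ₗ
    (TensorProduct.assoc k g g (g ⊗[k] g)).toLinearMap

lemma sigma23_tComm (t : g ⊗[k] g) (hsymm : TensorProduct.comm k g g t = t)
    (hinv : ∀ x : g, ⁅x, t⁆ = 0) :
    sigma23 k (tCommutator k t) = - tCommutator k t := by
  have hz : ∀ s : g ⊗[k] g, ThetaG k g (s ⊗ₜ[k] t) = 0 := by
    intro s
    induction s using TensorProduct.induction_on with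
    | zero => simp [zero_tmul]
    | tmul x y => simp [ThetaG, hinv]
    | add u v hu hv => rw [add_tmul, map_add, hu, hv, add_zero]
  have hsplit : ThetaG k g = LCmap k g + sigma23 k ∘ₗ LCmap k g ∘ₗ
      (TensorProduct.map LinearMap.id (TensorProduct.comm k g g).toLinearMap) := by
    ext x y x' y'
    simp [ThetaG, tmul_add]
  have h0 := hz t
  rw [hsplit] at h0
  simp only [LinearMap.add_apply, LinearMap.comp_apply, TensorProduct.map_tmul,
    LinearMap.id_apply, LinearEquiv.coe_coe, hsymm] at h0
  rw [← tCommutator_eq] at h0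
  exact eq_neg_of_add_eq_zero_right h0
end tComm

section tComm12
variable {k : Type*} {g : Type*} [Field k] [LieRing g] [LieAlgebra k g]

noncomputable def GammaG (k : Type*) (g : Type*) [Field k] [LieRing g] [LieAlgebra k g] :
    (g ⊗[k] g) ⊗[k] (g ⊗[k] g) →ₗ[k] g ⊗[k] (g ⊗[k] g) :=
  (TensorProduct.assoc k g g g).toLinearMap ∘ₗ
    (TensorProduct.map (brMap k g) LinearMap.id) ∘ₗ
    (TensorProduct.assoc k g (g ⊗[k] g) g).symm.toLinearMap ∘ₗ
    (TensorProduct.map LinearMap.id (TensorProduct.comm k g (g ⊗[k] g)).toLinearMap) ∘ₗ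
    (TensorProduct.assoc k g g (g ⊗[k] g)).toLinearMap ∘ₗ
    (TensorProduct.comm k (g ⊗[k] g) (g ⊗[k] g)).toLinearMap

noncomputable def LGmap (k : Type*) (g : Type*) [Field k] [LieRing g] [LieAlgebra k g] :
    (g ⊗[k] g) ⊗[k] (g ⊗[k] g) →ₗ[k] g ⊗[k] (g ⊗[k] g) :=
  (TensorProduct.map (TensorProduct.lift (LieAlgebra.ad k g)) LinearMap.id) ∘ₗ
    (TensorProduct.map (TensorProduct.comm k g g).toLinearMap LinearMap.id) ∘ₗ
    (TensorProduct.tensorTensorTensorComm k g g g g).toLinearMap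

@[simp] lemma LGmap_tmul (x y x' y' : g) :
    LGmap k g ((x ⊗ₜ[k] y) ⊗ₜ[k] (x' ⊗ₜ[k] y')) = ⁅x', x⁆ ⊗ₜ[k] (y ⊗ₜ[k] y') := by
  simp [LGmap, LieAlgebra.ad_apply]

lemma sigma12_tComm (t : g ⊗[k] g) (hsymm : TensorProduct.comm k g g t = t)
    (hinv : ∀ x : g, ⁅x, t⁆ = 0) :
    sigma12 k (tCommutator k t) = - tCommutator k t := by
  have hz : ∀ s : g ⊗[k] g, GammaG k g (t ⊗ₜ[k] s) = 0 := by
    intro s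
    induction s using TensorProduct.induction_on with
    | zero => simp [tmul_zero]
    | tmul x y => simp [GammaG, hinv]
    | add u v hu hv => rw [tmul_add, map_add, hu, hv, add_zero]
  have hsk : ∀ a b : g, ⁅a, b⁆ = -⁅b, a⁆ := fun a b => (neg_eq_iff_eq_neg.mp (lie_skew b a))
  have hsplit : GammaG k g = LGmap k g - LCmap k g := by
    ext x y x' y'
    simp only [AlgebraTensorModule.curry_apply, curry_apply, LinearMap.coe_restrictScalars,
      LinearMap.sub_apply]
    rw [show GammaG k g ((x ⊗ₜ[k] y) ⊗ₜ[k] (x' ⊗ₜ[k] y')) =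
      ⁅x', x⁆ ⊗ₜ[k] (y ⊗ₜ[k] y') + x ⊗ₜ[k] (⁅x', y⁆ ⊗ₜ[k] y') from by
        simp [GammaG, add_tmul, tmul_add], LGmap_tmul, LCmap_tmul, hsk x' y]
    rw [neg_tmul, tmul_neg, sub_eq_add_neg]
  have hLG : LGmap k g (t ⊗ₜ[k] t) = tCommutator k t := by
    have h0 := hz t
    rw [hsplit] at h0
    simp only [LinearMap.sub_apply] at h0
    rw [← tCommutator_eq] at h0
    exact sub_eq_zero.mp h0
  have hswap : sigma12 k ∘ₗ LCmap k g =
      -(LGmap k g ∘ₗ (TensorProduct.map (TensorProduct.comm k g g).toLinearMap LinearMap.id)) := by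
    ext x y x' y'
    simp only [AlgebraTensorModule.curry_apply, curry_apply, LinearMap.coe_restrictScalars,
      LinearMap.comp_apply, LinearMap.neg_apply, TensorProduct.map_tmul, LinearEquiv.coe_coe,
      TensorProduct.comm_tmul, LinearMap.id_apply, LCmap_tmul, LGmap_tmul, sigma12_tmul,
      hsk x' y, neg_tmul, neg_neg]
  have := LinearMap.congr_fun hswap (t ⊗ₜ[k] t)
  simp only [LinearMap.comp_apply, LinearMap.neg_apply, TensorProduct.map_tmul,
    LinearMap.id_apply, LinearEquiv.coe_coe, hsymm] at this
  rw [← tCommutator_eq, hLG] at this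
  exact this
end tComm12

end AuxEE

@[simp] lemma threeLegM_tmul {k : Type*} [Field k] {g M : Type*} [AddCommGroup g] [Module k g]
    [AddCommGroup M] [Module k M] (ρ : g →ₗ[k] Module.End k M) (x y z : g) :
    threeLegM ρ (x ⊗ₜ[k] (y ⊗ₜ[k] z)) =
      TensorProduct.map (ρ x) (TensorProduct.map (ρ y) (ρ z)) := by
  simp [threeLegM, twoLegM]

set_option maxHeartbeats 2000000 in
/-- Enriquez–Etingof: suppose `m_ħ = Σ ħⁱ m⁽ⁱ⁾` is `Φ`-twisted
associative, where `Φ_A = Σ ħⁿ Φₙ` with `Φ₀ = 1`, `Φ₁ = 0`, `Φ₂ = φ/6` (the expansion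
of `Φ(ħt¹², ħt²³)`), each `m⁽ⁱ⁾` is `g`-equivariant, and `m₀ = m⁽⁰⁾` is commutative.
Then `{a,b} := m⁽¹⁾(a⊗b − b⊗a)` is a `g`-invariant skew-symmetric biderivation of
`(A, m₀)` satisfying `{a₁,{a₂,a₃}} + c.p. = −m₀⁽³⁾(φ·(a₁⊗a₂⊗a₃))`, i.e. `(A, m₀, {·,·})`
is a `g`-quasi-Poisson algebra. -/
theorem statement_15
    {g : Type*} [LieRing g] [LieAlgebra k g]
    {A : Type*} [AddCommGroup A] [Module k A]
    (ρ : g →ₗ[k] Module.End k A)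
    (hlie : ∀ x y : g, ρ ⁅x, y⁆ = ρ x * ρ y - ρ y * ρ x)
    (t : g ⊗[k] g)
    (hsymm : TensorProduct.comm k g g t = t)
    (hinv : ∀ x : g, ⁅x, t⁆ = 0)
    -- the coefficients of `m_ħ`
    (ms : ℕ → (A ⊗[k] A →ₗ[k] A))
    -- the coefficients of the action `Φ_A` of `Φ(ħt¹², ħt²³)`
    (Φs : ℕ → Module.End k (A ⊗[k] (A ⊗[k] A)))
    (hΦ0 : Φs 0 = LinearMap.id)
    (hΦ1 : Φs 1 = 0)
    (hΦ2 : Φs 2 = (6⁻¹ : k) • threeLegM ρ (cartanPhi k t))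
    -- `g`-equivariance of each coefficient of `m_ħ`
    (hequiv : ∀ (n : ℕ) (x : g),
      (ρ x) ∘ₗ ms n = ms n ∘ₗ
        (TensorProduct.map (ρ x) LinearMap.id + TensorProduct.map LinearMap.id (ρ x)))
    -- `Φ`-twisted associativity, order by order in `ħ`:
    -- `Σ_{i+j+l=n} mᵢ ∘ (1 ⊗ mⱼ) ∘ Φ_l = Σ_{i+j=n} mᵢ ∘ (mⱼ ⊗ 1)`
    (hassoc : ∀ n : ℕ,
      ∑ p ∈ Finset.HasAntidiagonal.antidiagonal n, ∑ q ∈ Finset.HasAntidiagonal.antidiagonal p.2,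
        (ms p.1) ∘ₗ (TensorProduct.map LinearMap.id (ms q.1)) ∘ₗ (Φs q.2) =
      ∑ p ∈ Finset.HasAntidiagonal.antidiagonal n,
        (ms p.1) ∘ₗ (TensorProduct.map (ms p.2) LinearMap.id) ∘ₗ
          (TensorProduct.assoc k A A A).symm.toLinearMap)
    -- `m₀` is commutative
    (hcomm : ∀ a b : A, ms 0 (a ⊗ₜ[k] b) = ms 0 (b ⊗ₜ[k] a))
    -- the bracket
    (br : A → A → A)
    (hbr : ∀ a b, br a b = ms 1 (a ⊗ₜ[k] b - b ⊗ₜ[k] a)) :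
    -- skew-symmetry
    (∀ a b, br a b = - br b a)
    -- biderivation with respect to `m₀`
    ∧ (∀ a b c : A,
        br a (ms 0 (b ⊗ₜ[k] c)) = ms 0 (br a b ⊗ₜ[k] c) + ms 0 (b ⊗ₜ[k] br a c))
    -- `g`-invariance
    ∧ (∀ (x : g) (a b : A), ρ x (br a b) = br (ρ x a) b + br a (ρ x b))
    -- the `φ`-twisted Jacobi identity
    ∧ (∀ a₁ a₂ a₃ : A,
        br a₁ (br a₂ a₃) + br a₂ (br a₃ a₁) + br a₃ (br a₁ a₂) =
          - (ms 0 ∘ₗ TensorProduct.map LinearMap.id (ms 0))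
              (threeLegM ρ (cartanPhi k t) (a₁ ⊗ₜ[k] (a₂ ⊗ₜ[k] a₃)))) := by
  classical
  have hE0 : ∀ a b c : A, ms 0 (a ⊗ₜ[k] ms 0 (b ⊗ₜ[k] c)) = ms 0 (ms 0 (a ⊗ₜ[k] b) ⊗ₜ[k] c) := by
    intro a b c
    have h := LinearMap.congr_fun (hassoc 0) (a ⊗ₜ[k] (b ⊗ₜ[k] c))
    simp only [Finset.Nat.sum_antidiagonal_eq_sum_range_succ_mk, Finset.sum_range_one,
      Nat.sub_self, Nat.sub_zero, hΦ0, LinearMap.sum_apply, LinearMap.comp_apply,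
      LinearMap.id_apply, TensorProduct.map_tmul, LinearEquiv.coe_coe,
      TensorProduct.assoc_symm_tmul, LinearMap.id_coe, id_eq] at h
    exact h
  have hE1 : ∀ a b c : A,
      ms 0 (a ⊗ₜ[k] ms 1 (b ⊗ₜ[k] c)) + ms 1 (a ⊗ₜ[k] ms 0 (b ⊗ₜ[k] c)) =
      ms 0 (ms 1 (a ⊗ₜ[k] b) ⊗ₜ[k] c) + ms 1 (ms 0 (a ⊗ₜ[k] b) ⊗ₜ[k] c) := by
    intro a b c
    have h := LinearMap.congr_fun (hassoc 1) (a ⊗ₜ[k] (b ⊗ₜ[k] c))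
    simp only [Finset.Nat.sum_antidiagonal_eq_sum_range_succ_mk, Finset.sum_range_succ,
      Finset.sum_range_zero, Finset.sum_range_one, Nat.sub_self, Nat.sub_zero,
      Nat.reduceSub, hΦ0, hΦ1, LinearMap.sum_apply, LinearMap.add_apply,
      LinearMap.comp_apply, LinearMap.id_apply, LinearMap.zero_apply, map_zero,
      zero_add, add_zero, TensorProduct.map_tmul, LinearEquiv.coe_coe,
      TensorProduct.assoc_symm_tmul, LinearMap.id_coe, id_eq] at h
    exact h
  have hE2 : ∀ a b c : A,
      (6⁻¹ : k) • ms 0 ((TensorProduct.map LinearMap.id (ms 0)) (threeLegM ρ (cartanPhi k t) (a ⊗ₜ[k] (b ⊗ₜ[k] c)))) + ms 0 (a ⊗ₜ[k] ms 2 (b ⊗ₜ[k] c)) + ms 1 (a ⊗ₜ[k] ms 1 (b ⊗ₜ[k] c)) +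
        ms 2 (a ⊗ₜ[k] ms 0 (b ⊗ₜ[k] c)) =
      ms 0 (ms 2 (a ⊗ₜ[k] b) ⊗ₜ[k] c) + ms 1 (ms 1 (a ⊗ₜ[k] b) ⊗ₜ[k] c) +
        ms 2 (ms 0 (a ⊗ₜ[k] b) ⊗ₜ[k] c) := by
    intro a b c
    have h := LinearMap.congr_fun (hassoc 2) (a ⊗ₜ[k] (b ⊗ₜ[k] c))
    simp only [Finset.Nat.sum_antidiagonal_eq_sum_range_succ_mk, Finset.sum_range_succ,
      Finset.sum_range_zero, Finset.sum_range_one, Nat.sub_self, Nat.sub_zero,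
      Nat.reduceSub, hΦ0, hΦ1, hΦ2, LinearMap.sum_apply, LinearMap.add_apply,
      LinearMap.comp_apply, LinearMap.id_apply, LinearMap.zero_apply, map_zero,
      zero_add, add_zero, LinearMap.smul_apply, map_smul,
      TensorProduct.map_tmul, LinearEquiv.coe_coe,
      TensorProduct.assoc_symm_tmul, LinearMap.id_coe, id_eq] at h
    exact h
  -- skew symmetry
  have hskew : ∀ a b : A, br a b = - br b a := by
    intro a b
    rw [hbr a b, hbr b a, ← map_neg, neg_sub]
  -- biderivation
  have hbider : ∀ a b c : A,
      br a (ms 0 (b ⊗ₜ[k] c)) = ms 0 (br a b ⊗ₜ[k] c) + ms 0 (b ⊗ₜ[k] br a c) := by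
    intro a b c
    have h1 := hE1 a b c
    have h2 := hE1 b c a
    have h3 := hE1 b a c
    rw [hcomm c a, hcomm (ms 1 (b ⊗ₜ[k] c)) a] at h2
    rw [hcomm b a] at h3
    rw [hbr, hbr, hbr]
    simp only [map_sub, tmul_sub, sub_tmul]
    rw [← sub_eq_zero]
    have hsum : (ms 0 (a ⊗ₜ[k] ms 1 (b ⊗ₜ[k] c)) + ms 1 (a ⊗ₜ[k] ms 0 (b ⊗ₜ[k] c)))
        + (ms 0 (b ⊗ₜ[k] ms 1 (c ⊗ₜ[k] a)) + ms 1 (b ⊗ₜ[k] ms 0 (a ⊗ₜ[k] c)))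
        - (ms 0 (b ⊗ₜ[k] ms 1 (a ⊗ₜ[k] c)) + ms 1 (b ⊗ₜ[k] ms 0 (a ⊗ₜ[k] c))) =
        (ms 0 (ms 1 (a ⊗ₜ[k] b) ⊗ₜ[k] c) + ms 1 (ms 0 (a ⊗ₜ[k] b) ⊗ₜ[k] c))
        + (ms 0 (a ⊗ₜ[k] ms 1 (b ⊗ₜ[k] c)) + ms 1 (ms 0 (b ⊗ₜ[k] c) ⊗ₜ[k] a))
        - (ms 0 (ms 1 (b ⊗ₜ[k] a) ⊗ₜ[k] c) + ms 1 (ms 0 (a ⊗ₜ[k] b) ⊗ₜ[k] c)) := by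
      rw [h1, h2, h3]
    rw [← sub_eq_zero] at hsum
    abel_nf at hsum ⊢
    exact hsum
  -- g-invariance
  have hginv : ∀ (x : g) (a b : A), ρ x (br a b) = br (ρ x a) b + br a (ρ x b) := by
    intro x a b
    have hx : ∀ u v : A, ρ x (ms 1 (u ⊗ₜ[k] v)) =
        ms 1 ((ρ x u) ⊗ₜ[k] v) + ms 1 (u ⊗ₜ[k] (ρ x v)) := by
      intro u v
      have h := LinearMap.congr_fun (hequiv 1 x) (u ⊗ₜ[k] v)
      simpa only [LinearMap.comp_apply, LinearMap.add_apply, TensorProduct.map_tmul,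
        LinearMap.id_coe, id_eq, map_add] using h
    simp only [hbr, map_sub, tmul_sub, sub_tmul, hx]
    abel
  refine ⟨hskew, hbider, hginv, ?_⟩
  -- the quasi-Poisson Jacobi identity
  intro a₁ a₂ a₃
  -- symmetry helpers for the commutative product m₀
  have hswapo : ∀ x y z : A, ms 0 (x ⊗ₜ[k] ms 0 (y ⊗ₜ[k] z)) =
      ms 0 (y ⊗ₜ[k] ms 0 (x ⊗ₜ[k] z)) := by
    intro x y z
    rw [hE0, hcomm x y, ← hE0]
  have hswapi : ∀ x y z : A, ms 0 (x ⊗ₜ[k] ms 0 (y ⊗ₜ[k] z)) =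
      ms 0 (x ⊗ₜ[k] ms 0 (z ⊗ₜ[k] y)) := by
    intro x y z
    rw [hcomm y z]
  -- permutation behaviour of the three-leg action composed with m₀⁽³⁾
  have hperm12 : ∀ (w : g ⊗[k] (g ⊗[k] g)) (a b c : A),
      ms 0 ((TensorProduct.map LinearMap.id (ms 0)) (threeLegM ρ w (b ⊗ₜ[k] (a ⊗ₜ[k] c)))) =
      ms 0 ((TensorProduct.map LinearMap.id (ms 0))
        (threeLegM ρ (sigma12 k w) (a ⊗ₜ[k] (b ⊗ₜ[k] c)))) := by
    intro w a b c
    induction w using TensorProduct.induction_on with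
    | zero => simp
    | add u v hu hv => simp only [map_add, LinearMap.add_apply, hu, hv]
    | tmul x w2 =>
      induction w2 using TensorProduct.induction_on with
      | zero => simp [tmul_zero]
      | add u v hu hv => simp only [tmul_add, map_add, LinearMap.add_apply, hu, hv]
      | tmul y z =>
        simp only [threeLegM_tmul, sigma12_tmul, TensorProduct.map_tmul,
          LinearMap.id_coe, id_eq]
        exact hswapo (ρ x b) (ρ y a) (ρ z c)
  have hperm23 : ∀ (w : g ⊗[k] (g ⊗[k] g)) (a b c : A),
      ms 0 ((TensorProduct.map LinearMap.id (ms 0)) (threeLegM ρ w (a ⊗ₜ[k] (c ⊗ₜ[k] b)))) =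
      ms 0 ((TensorProduct.map LinearMap.id (ms 0))
        (threeLegM ρ (sigma23 k w) (a ⊗ₜ[k] (b ⊗ₜ[k] c)))) := by
    intro w a b c
    induction w using TensorProduct.induction_on with
    | zero => simp
    | add u v hu hv => simp only [map_add, LinearMap.add_apply, hu, hv]
    | tmul x w2 =>
      induction w2 using TensorProduct.induction_on with
      | zero => simp [tmul_zero]
      | add u v hu hv => simp only [tmul_add, map_add, LinearMap.add_apply, hu, hv]
      | tmul y z =>
        simp only [threeLegM_tmul, sigma23_tmul, TensorProduct.map_tmul,
          LinearMap.id_coe, id_eq]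
        exact hswapi (ρ x a) (ρ y c) (ρ z b)
  have ht12 : sigma12 k (cartanPhi k t) = - cartanPhi k t := by
    unfold cartanPhi
    rw [map_smul, sigma12_tComm t hsymm hinv, smul_neg]
  have ht23 : sigma23 k (cartanPhi k t) = - cartanPhi k t := by
    unfold cartanPhi
    rw [map_smul, sigma23_tComm t hsymm hinv, smul_neg]
  have hP12 : ∀ x y z : A, ms 0 ((TensorProduct.map LinearMap.id (ms 0)) (threeLegM ρ (cartanPhi k t) (y ⊗ₜ[k] (x ⊗ₜ[k] z)))) = - ms 0 ((TensorProduct.map LinearMap.id (ms 0)) (threeLegM ρ (cartanPhi k t) (x ⊗ₜ[k] (y ⊗ₜ[k] z)))) := by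
    intro x y z
    rw [hperm12 (cartanPhi k t) x y z, ht12]
    simp only [map_neg, LinearMap.neg_apply]
  have hP23 : ∀ x y z : A, ms 0 ((TensorProduct.map LinearMap.id (ms 0)) (threeLegM ρ (cartanPhi k t) (x ⊗ₜ[k] (z ⊗ₜ[k] y)))) = - ms 0 ((TensorProduct.map LinearMap.id (ms 0)) (threeLegM ρ (cartanPhi k t) (x ⊗ₜ[k] (y ⊗ₜ[k] z)))) := by
    intro x y z
    rw [hperm23 (cartanPhi k t) x y z, ht23]
    simp only [map_neg, LinearMap.neg_apply]
  have h6 : ∀ v : A, (6 : ℕ) • ((6⁻¹ : k) • v) = v := by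
    intro v
    rw [← Nat.cast_smul_eq_nsmul k, smul_smul]
    norm_num
  have hsum : ((6⁻¹ : k) • ms 0 ((TensorProduct.map LinearMap.id (ms 0)) (threeLegM ρ (cartanPhi k t) (a₁ ⊗ₜ[k] (a₂ ⊗ₜ[k] a₃)))) + ms 0 (a₁ ⊗ₜ[k] ms 2 (a₂ ⊗ₜ[k] a₃)) + ms 1 (a₁ ⊗ₜ[k] ms 1 (a₂ ⊗ₜ[k] a₃)) + ms 2 (a₁ ⊗ₜ[k] ms 0 (a₂ ⊗ₜ[k] a₃)))
        - ((6⁻¹ : k) • ms 0 ((TensorProduct.map LinearMap.id (ms 0)) (threeLegM ρ (cartanPhi k t) (a₂ ⊗ₜ[k] (a₁ ⊗ₜ[k] a₃)))) + ms 0 (a₂ ⊗ₜ[k] ms 2 (a₁ ⊗ₜ[k] a₃)) + ms 1 (a₂ ⊗ₜ[k] ms 1 (a₁ ⊗ₜ[k] a₃)) + ms 2 (a₂ ⊗ₜ[k] ms 0 (a₁ ⊗ₜ[k] a₃)))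
        - ((6⁻¹ : k) • ms 0 ((TensorProduct.map LinearMap.id (ms 0)) (threeLegM ρ (cartanPhi k t) (a₃ ⊗ₜ[k] (a₂ ⊗ₜ[k] a₁)))) + ms 0 (a₃ ⊗ₜ[k] ms 2 (a₂ ⊗ₜ[k] a₁)) + ms 1 (a₃ ⊗ₜ[k] ms 1 (a₂ ⊗ₜ[k] a₁)) + ms 2 (a₃ ⊗ₜ[k] ms 0 (a₂ ⊗ₜ[k] a₁)))
        - ((6⁻¹ : k) • ms 0 ((TensorProduct.map LinearMap.id (ms 0)) (threeLegM ρ (cartanPhi k t) (a₁ ⊗ₜ[k] (a₃ ⊗ₜ[k] a₂)))) + ms 0 (a₁ ⊗ₜ[k] ms 2 (a₃ ⊗ₜ[k] a₂)) + ms 1 (a₁ ⊗ₜ[k] ms 1 (a₃ ⊗ₜ[k] a₂)) + ms 2 (a₁ ⊗ₜ[k] ms 0 (a₃ ⊗ₜ[k] a₂)))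
        + ((6⁻¹ : k) • ms 0 ((TensorProduct.map LinearMap.id (ms 0)) (threeLegM ρ (cartanPhi k t) (a₂ ⊗ₜ[k] (a₃ ⊗ₜ[k] a₁)))) + ms 0 (a₂ ⊗ₜ[k] ms 2 (a₃ ⊗ₜ[k] a₁)) + ms 1 (a₂ ⊗ₜ[k] ms 1 (a₃ ⊗ₜ[k] a₁)) + ms 2 (a₂ ⊗ₜ[k] ms 0 (a₃ ⊗ₜ[k] a₁)))
        + ((6⁻¹ : k) • ms 0 ((TensorProduct.map LinearMap.id (ms 0)) (threeLegM ρ (cartanPhi k t) (a₃ ⊗ₜ[k] (a₁ ⊗ₜ[k] a₂)))) + ms 0 (a₃ ⊗ₜ[k] ms 2 (a₁ ⊗ₜ[k] a₂)) + ms 1 (a₃ ⊗ₜ[k] ms 1 (a₁ ⊗ₜ[k] a₂)) + ms 2 (a₃ ⊗ₜ[k] ms 0 (a₁ ⊗ₜ[k] a₂))) =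
      (ms 0 (ms 2 (a₁ ⊗ₜ[k] a₂) ⊗ₜ[k] a₃) + ms 1 (ms 1 (a₁ ⊗ₜ[k] a₂) ⊗ₜ[k] a₃) + ms 2 (ms 0 (a₁ ⊗ₜ[k] a₂) ⊗ₜ[k] a₃))
        - (ms 0 (ms 2 (a₂ ⊗ₜ[k] a₁) ⊗ₜ[k] a₃) + ms 1 (ms 1 (a₂ ⊗ₜ[k] a₁) ⊗ₜ[k] a₃) + ms 2 (ms 0 (a₂ ⊗ₜ[k] a₁) ⊗ₜ[k] a₃))
        - (ms 0 (ms 2 (a₃ ⊗ₜ[k] a₂) ⊗ₜ[k] a₁) + ms 1 (ms 1 (a₃ ⊗ₜ[k] a₂) ⊗ₜ[k] a₁) + ms 2 (ms 0 (a₃ ⊗ₜ[k] a₂) ⊗ₜ[k] a₁))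
        - (ms 0 (ms 2 (a₁ ⊗ₜ[k] a₃) ⊗ₜ[k] a₂) + ms 1 (ms 1 (a₁ ⊗ₜ[k] a₃) ⊗ₜ[k] a₂) + ms 2 (ms 0 (a₁ ⊗ₜ[k] a₃) ⊗ₜ[k] a₂))
        + (ms 0 (ms 2 (a₂ ⊗ₜ[k] a₃) ⊗ₜ[k] a₁) + ms 1 (ms 1 (a₂ ⊗ₜ[k] a₃) ⊗ₜ[k] a₁) + ms 2 (ms 0 (a₂ ⊗ₜ[k] a₃) ⊗ₜ[k] a₁))
        + (ms 0 (ms 2 (a₃ ⊗ₜ[k] a₁) ⊗ₜ[k] a₂) + ms 1 (ms 1 (a₃ ⊗ₜ[k] a₁) ⊗ₜ[k] a₂) + ms 2 (ms 0 (a₃ ⊗ₜ[k] a₁) ⊗ₜ[k] a₂)) := by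
    rw [hE2 a₁ a₂ a₃, hE2 a₂ a₁ a₃, hE2 a₃ a₂ a₁, hE2 a₁ a₃ a₂, hE2 a₂ a₃ a₁, hE2 a₃ a₁ a₂]
  rw [hP12 a₂ a₃ a₁, hP23 a₂ a₁ a₃, hP12 a₁ a₂ a₃, hP12 a₁ a₃ a₂, hP23 a₁ a₂ a₃] at hsum
  rw [hcomm a₂ a₁, hcomm a₃ a₂, hcomm a₃ a₁, hcomm a₁ (ms 2 (a₂ ⊗ₜ[k] a₃)),
    hcomm a₂ (ms 2 (a₁ ⊗ₜ[k] a₃)), hcomm a₃ (ms 2 (a₂ ⊗ₜ[k] a₁)),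
    hcomm a₁ (ms 2 (a₃ ⊗ₜ[k] a₂)), hcomm a₂ (ms 2 (a₃ ⊗ₜ[k] a₁)),
    hcomm a₃ (ms 2 (a₁ ⊗ₜ[k] a₂))] at hsum
  simp only [smul_neg, neg_neg] at hsum
  simp only [hbr, map_sub, tmul_sub, sub_tmul, LinearMap.comp_apply]
  rw [← h6 (ms 0 ((TensorProduct.map LinearMap.id (ms 0)) (threeLegM ρ (cartanPhi k t) (a₁ ⊗ₜ[k] (a₂ ⊗ₜ[k] a₃)))))]
  rw [← sub_eq_zero] at hsum ⊢
  abel_nf at hsum ⊢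
  exact hsum
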